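/- If X is a partial group whose set X_1 of elements has exactly n + 1 elements, then X is n-skeletal. -/

import Mathlib

/-- A symmetric (simplicial) set: a functor `Υᵒᵖ → Set`, where `Υ` has objects
`[n] = {0,…,n}` (encoded as `Fin (n+1)`) and all functions as morphisms.
For `α : [m] → [n]` and `x ∈ X_n`, `act α x` is `x · α ∈ X_m`. -/
structure SymSet where
  obj : ℕ → Type
  act : ∀ {m n : ℕ}, (Fin (m + 1) → Fin (n + 1)) → obj n → obj m
  act_id : ∀ {n : ℕ} (x : obj n), act id x = x
  act_comp : ∀ {m n k : ℕ} (α : Fin (m + 1) → Fin (n + 1)) (β : Fin (n + 1) → Fin (k + 1))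
      (x : obj k), act α (act β x) = act (β ∘ α) x

namespace SymSet

/-- `x_{ij} ∈ X_1`, the action on `x ∈ X_n` of the map `[1] → [n]` with `0 ↦ i`, `1 ↦ j`. -/
def edge (X : SymSet) {n : ℕ} (i j : Fin (n + 1)) (x : X.obj n) : X.obj 1 :=
  X.act (fun t : Fin 2 => if t = 0 then i else j) x

/-- The domain of an edge, its image under `ι₀ : [0] → [1]`, `0 ↦ 0`. -/
def edgeDom (X : SymSet) (f : X.obj 1) : X.obj 0 :=
  X.act (fun _ : Fin 1 => (0 : Fin 2)) f

/-- The codomain of an edge, its image under `ι₁ : [0] → [1]`, `0 ↦ 1`. -/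
def edgeCod (X : SymSet) (f : X.obj 1) : X.obj 0 :=
  X.act (fun _ : Fin 1 => (1 : Fin 2)) f

/-- The identity edge `id_a` on an object `a ∈ X_0`, induced by the unique map `[1] → [0]`. -/
def identityEdge (X : SymSet) (a : X.obj 0) : X.obj 1 :=
  X.act (fun _ : Fin 2 => (0 : Fin 1)) a

/-- An edge is an identity if it is in the image of `X_0 → X_1`. -/
def IsIdentityEdge (X : SymSet) (f : X.obj 1) : Prop :=
  ∃ a : X.obj 0, f = X.identityEdge a

/-- The tuple of edges `x_{ij}` (for `i < j` an edge `{i,j}` of the spine `T`)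
associated to an `n`-simplex `x`. -/
def spineTuple (X : SymSet) {n : ℕ} (T : SimpleGraph (Fin (n + 1))) (x : X.obj n) :
    ∀ i j : Fin (n + 1), i < j → T.Adj i j → X.obj 1 :=
  fun i j _ _ => X.edge i j x

/-- Membership in `lim_T X`: the components have matching endpoints. -/
def IsSpineLim (X : SymSet) {n : ℕ} (T : SimpleGraph (Fin (n + 1)))
    (e : ∀ i j : Fin (n + 1), i < j → T.Adj i j → X.obj 1) : Prop :=
  ∃ v : Fin (n + 1) → X.obj 0, ∀ (i j : Fin (n + 1)) (hlt : i < j) (h : T.Adj i j),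
    X.edgeDom (e i j hlt h) = v i ∧ X.edgeCod (e i j hlt h) = v j

/-- The limit `lim_T X` of the diagram associated to a spine `T`. -/
def SpineLim (X : SymSet) {n : ℕ} (T : SimpleGraph (Fin (n + 1))) : Type :=
  { e : ∀ i j : Fin (n + 1), i < j → T.Adj i j → X.obj 1 // X.IsSpineLim T e }

lemma spineTuple_isSpineLim (X : SymSet) {n : ℕ} (T : SimpleGraph (Fin (n + 1)))
    (x : X.obj n) : X.IsSpineLim T (X.spineTuple T x) := by
  refine ⟨fun i => X.act (fun _ : Fin 1 => i) x, fun i j hlt h => ⟨?_, ?_⟩⟩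
  · show X.act _ (X.act _ x) = _
    rw [X.act_comp]
    show X.act ((fun t : Fin 2 => if t = 0 then i else j) ∘ fun _ : Fin 1 => 0) x
      = X.act (fun _ : Fin 1 => i) x
    congr 1
  · show X.act _ (X.act _ x) = _
    rw [X.act_comp]
    show X.act ((fun t : Fin 2 => if t = 0 then i else j) ∘ fun _ : Fin 1 => 1) x
      = X.act (fun _ : Fin 1 => j) x
    congr 1

/-- The map `𝓔_T : X_n → lim_T X`. -/
def spineMap (X : SymSet) {n : ℕ} (T : SimpleGraph (Fin (n + 1))) (x : X.obj n) :
    X.SpineLim T :=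
  ⟨X.spineTuple T x, X.spineTuple_isSpineLim T x⟩

/-- A symmetric set is *spiny* if `𝓔_T` is injective for every `n ≥ 1` and
every spine `T` of `[n]` (a tree with vertex set `[n]`). -/
def Spiny (X : SymSet) : Prop :=
  ∀ n : ℕ, 1 ≤ n → ∀ T : SimpleGraph (Fin (n + 1)), T.IsTree →
    Function.Injective (X.spineMap T)

/-- An element `x ∈ X_n` is degenerate if `x = y · σ` for some noninvertible
surjection `σ : [n] → [k]`. -/
def Degenerate (X : SymSet) {n : ℕ} (x : X.obj n) : Prop :=
  ∃ (k : ℕ) (σ : Fin (n + 1) → Fin (k + 1)) (y : X.obj k),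
    Function.Surjective σ ∧ ¬ Function.Bijective σ ∧ x = X.act σ y

/-- A symmetric subset (subfunctor) of `X`. -/
structure SymSubset (X : SymSet) where
  carrier : ∀ n : ℕ, Set (X.obj n)
  act_mem : ∀ {m n : ℕ} (α : Fin (m + 1) → Fin (n + 1)) {x : X.obj n},
    x ∈ carrier n → X.act α x ∈ carrier m

/-- `X` is `n`-skeletal: the smallest symmetric subset of `X` containing all
of its `n`-simplices is all of `X`. -/
def IsSkeletal (X : SymSet) (n : ℕ) : Prop :=
  ∀ Y : SymSubset X, (∀ x : X.obj n, x ∈ Y.carrier n) →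
    ∀ (m : ℕ) (x : X.obj m), x ∈ Y.carrier m

/-- `X` has dimension `n`: it is `n`-skeletal but not `k`-skeletal for `k < n`
(for `n ≥ 1` this is equivalent to not being `(n-1)`-skeletal). -/
def HasDim (X : SymSet) (n : ℕ) : Prop :=
  X.IsSkeletal n ∧ ∀ k : ℕ, k < n → ¬ X.IsSkeletal k

/-- Two objects are related if there is an edge between them (in either direction). -/
def EdgeRel (X : SymSet) (a b : X.obj 0) : Prop :=
  ∃ f : X.obj 1, (X.edgeDom f = a ∧ X.edgeCod f = b) ∨ (X.edgeDom f = b ∧ X.edgeCod f = a)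

/-- `X` is connected: it is nonempty and any two objects are joined by a
zig-zag of edges. -/
def Connected (X : SymSet) : Prop :=
  Nonempty (X.obj 0) ∧ ∀ a b : X.obj 0, Relation.ReflTransGen X.EdgeRel a b

/-- `n_a`: the number of nonidentity edges with domain `a`. -/
noncomputable def nEdges (X : SymSet) (a : X.obj 0) : ℕ :=
  Nat.card { f : X.obj 1 // X.edgeDom f = a ∧ ¬ X.IsIdentityEdge f }

/-- `p(X)`: the maximum of the `n_a` over all objects `a`. -/
noncomputable def pVal (X : SymSet) : ℕ := ⨆ a : X.obj 0, X.nEdges a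

/-- A map of symmetric sets (a natural transformation). -/
structure SymMap (X Y : SymSet) where
  app : ∀ n : ℕ, X.obj n → Y.obj n
  naturality : ∀ {m n : ℕ} (α : Fin (m + 1) → Fin (n + 1)) (x : X.obj n),
    app m (X.act α x) = Y.act α (app n x)

/-- A map of symmetric sets is an isomorphism iff it is levelwise bijective. -/
def SymMap.IsIso {X Y : SymSet} (F : SymMap X Y) : Prop :=
  ∀ n : ℕ, Function.Bijective (F.app n)

/-- `X` and `Y` are isomorphic symmetric sets. -/
def Isomorphic (X Y : SymSet) : Prop := ∃ F : SymMap X Y, F.IsIso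

/-- The Bousfield–Segal map `𝓑_m : X_m → X_1^m`, `x ↦ (x_{01}, x_{02}, …, x_{0m})`. -/
def bousfield (X : SymSet) {m : ℕ} (x : X.obj m) : Fin m → X.obj 1 :=
  fun i => X.edge 0 i.succ x

/-- `X` is spiny in degrees below `q`: `𝓔_T` is injective for every spine `T`
of `[n]` for each `1 ≤ n ≤ q`. -/
def SpinyBelow (X : SymSet) (q : ℕ) : Prop :=
  ∀ n : ℕ, 1 ≤ n → n ≤ q → ∀ T : SimpleGraph (Fin (n + 1)), T.IsTree →
    Function.Injective (X.spineMap T)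

/-- `X` is a groupoid: `𝓔_T : X_n → lim_T X` is a bijection for every `n ≥ 1`
and every spine `T` of `[n]`. -/
def IsGroupoid (X : SymSet) : Prop :=
  ∀ n : ℕ, 1 ≤ n → ∀ T : SimpleGraph (Fin (n + 1)), T.IsTree →
    Function.Bijective (X.spineMap T)

/-- `X` is reduced: `X_0` is a singleton. -/
def Reduced (X : SymSet) : Prop := Nonempty (X.obj 0) ∧ Subsingleton (X.obj 0)

/-- A partial group is a reduced spiny symmetric set. -/
def IsPartialGroup (X : SymSet) : Prop := X.Reduced ∧ X.Spiny

/-- The levelwise product of two symmetric sets. -/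
def prod (X Y : SymSet) : SymSet where
  obj n := X.obj n × Y.obj n
  act α p := (X.act α p.1, Y.act α p.2)
  act_id p := by cases p with | mk a b => simp only [X.act_id, Y.act_id]
  act_comp α β p := by cases p with | mk a b => simp only [X.act_comp, Y.act_comp]

end SymSet

open SimpleGraph Walk in
/-- The star graph on `Fin (m+1)` centered at `0`. -/
def starG (m : ℕ) : SimpleGraph (Fin (m+1)) where
  Adj a b := a ≠ b ∧ (a = 0 ∨ b = 0)
  symm := by constructor; intro a b ⟨h1, h2⟩; exact ⟨h1.symm, h2.symm⟩
  loopless := by constructor; intro a ⟨h1, _⟩; exact h1 rfl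

open SimpleGraph Walk in
lemma starG_isTree (m : ℕ) : (starG m).IsTree := by
  constructor
  · refine ⟨?_⟩
    intro a b
    have h : ∀ c : Fin (m+1), (starG m).Reachable c 0 := by
      intro c
      by_cases hc : c = 0
      · subst hc; rfl
      · exact Adj.reachable ⟨hc, Or.inr rfl⟩
    exact (h a).trans (h b).symm
  · intro v c hc
    have h0 : (0 : Fin (m+1)) ∈ c.support := by
      cases c with
      | nil => exact absurd rfl hc.ne_nil
      | cons h p =>
        rcases h.2 with h' | h'
        · rw [support_cons]; exact h' ▸ List.mem_cons_self
        · rw [support_cons]; exact List.mem_cons_of_mem _ (h' ▸ p.start_mem_support)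
    have hc' := hc.rotate h0
    set c' := c.rotate _ h0 with hc'def
    clear_value c'
    clear hc hc'def h0 c
    cases c' with
    | nil => exact hc'.ne_nil rfl
    | cons h q =>
      cases q with
      | nil => have := hc'.three_le_length; simp at this
      | cons h' q' =>
        have hw : _ ≠ (0 : Fin (m+1)) := fun e => h.1 e.symm
        have hu : _ = (0 : Fin (m+1)) := h'.2.resolve_left hw
        subst hu
        cases q' with
        | nil => have := hc'.three_le_length; simp at this
        | cons h'' q'' =>
          have hnd := hc'.support_nodup
          simp only [support_cons, List.tail_cons, List.nodup_cons] at hnd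
          exact hnd.2.1 q''.end_mem_support

lemma SymSet.edge_act (X : SymSet) {m n : ℕ} (α : Fin (m+1) → Fin (n+1))
    (i j : Fin (m+1)) (x : X.obj n) :
    X.edge i j (X.act α x) = X.edge (α i) (α j) x := by
  unfold SymSet.edge
  rw [X.act_comp]
  congr 1
  funext t
  by_cases h : t = 0 <;> simp [h, Function.comp]

/-- Two simplices with the same star-spine edges are equal, in a spiny symmetric set. -/
lemma SymSet.eq_of_star_edges (X : SymSet) (hsp : X.Spiny) {m : ℕ} (hm : 1 ≤ m)
    (x y : X.obj m) (h : ∀ k : Fin (m+1), k ≠ 0 → X.edge 0 k x = X.edge 0 k y) :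
    x = y := by
  apply hsp m hm (starG m) (starG_isTree m)
  apply Subtype.ext
  funext a b hlt hadj
  have hb : b ≠ 0 := by
    intro hb0
    subst hb0
    exact absurd hlt (by simp [Fin.lt_def])
  have ha : a = 0 := hadj.2.resolve_right hb
  subst ha
  exact h b hb

/-- a partial group with `n + 1` elements is `n`-skeletal. -/
theorem stmt10 (X : SymSet) (hX : X.IsPartialGroup) (n : ℕ)
    (hcard : Nat.card (X.obj 1) = n + 1) : X.IsSkeletal n := by
  obtain ⟨-, hsp⟩ := hX
  intro Y hY m
  induction m using Nat.strong_induction_on with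
  | _ m ih =>
    intro x
    by_cases hm : m ≤ n
    · -- low degrees: recover x from an n-simplex
      set σ : Fin (m+1) → Fin (n+1) := Fin.castLE (by omega) with hσ
      set τ : Fin (n+1) → Fin (m+1) := fun i => ⟨min i.val m, by omega⟩ with hτ
      have hx : X.act σ (X.act τ x) = x := by
        rw [X.act_comp]
        have : τ ∘ σ = id := by
          funext k
          apply Fin.ext
          simp [hτ, hσ, Fin.castLE]
          omega
        rw [this, X.act_id]
      rw [← hx]
      exact Y.act_mem σ (hY (X.act τ x))
    · -- high degrees: x is degenerate
      push_neg at hm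
      obtain ⟨m', rfl⟩ : ∃ m', m = m' + 1 := ⟨m - 1, by omega⟩
      have hfin : Finite (X.obj 1) := Nat.finite_of_card_ne_zero (by omega)
      have hft : Fintype (X.obj 1) := Fintype.ofFinite _
      obtain ⟨i, j, hij, hedge⟩ :=
        Fintype.exists_ne_map_eq_of_card_lt
          (fun k : Fin (m' + 2) => X.edge 0 k x)
          (by
            rw [Fintype.card_fin, ← Nat.card_eq_fintype_card, hcard]
            omega)
      -- arrange j ≠ 0 (collapse j onto i)
      obtain ⟨i, j, hij, hj0, hedge⟩ :
          ∃ i j : Fin (m' + 2), i ≠ j ∧ j ≠ 0 ∧ X.edge 0 i x = X.edge 0 j x := by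
        by_cases hj : j = 0
        · exact ⟨j, i, hij.symm, fun h => hij (h.symm ▸ hj.symm ▸ rfl), hedge.symm⟩
        · exact ⟨i, j, hij, hj, hedge⟩
      set ρ : Fin (m' + 2) → Fin (m' + 2) := fun k => if k = j then i else k with hρ
      have hmiss : ∀ k, ρ k ≠ j := by
        intro k
        simp only [hρ]
        split
        · exact hij
        · assumption
      have hfix : X.act ρ x = x := by
        apply X.eq_of_star_edges hsp (by omega)
        intro k hk
        rw [X.edge_act]
        have h0 : ρ 0 = 0 := by simp [hρ, Ne.symm hj0]
        rw [h0]
        by_cases hkj : k = j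
        · subst hkj; simp only [hρ, if_pos rfl]; exact hedge
        · simp only [hρ, if_neg hkj]
      set sg : Fin (m' + 2) → Fin (m' + 1) :=
        fun k => (Fin.exists_succAbove_eq (hmiss k)).choose with hsg
      have hfact : ∀ k, j.succAbove (sg k) = ρ k :=
        fun k => (Fin.exists_succAbove_eq (hmiss k)).choose_spec
      have hy : X.act (j.succAbove) x ∈ Y.carrier m' :=
        ih m' (by omega) (X.act (j.succAbove) x)
      have : X.act sg (X.act (j.succAbove) x) = x := by
        rw [X.act_comp]
        have : (j.succAbove ∘ sg) = ρ := funext hfact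
        rw [this, hfix]
      rw [← this]
      exact Y.act_mem sg hy
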